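/- Let T be a tree on n ≥ 2 vertices and let w be a word-representant of T of minimal length 2n − 2. Let x and y be the two vertices of T that occur exactly once in w, with x occurring before y in w; then xy is an edge of T, and w is a concatenation w = u v where every letter of u is a vertex of T_{x,xy} and every letter of v is a vertex of T_{y,xy}, where T_{x,xy} (respectively T_{y,xy}) is the connected component containing x (respectively y) of the graph obtained from T by deleting the edge xy. -/

import Mathlib

open List

set_option linter.unusedSectionVars false
set_option maxHeartbeats 1000000

variable {V : Type*}

/-- The restriction of a word `w` to the letters `x` and `y`. -/
def restrictWord [DecidableEq V] (w : List V) (x y : V) : List V :=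
  w.filter fun z => decide (z = x ∨ z = y)

/-- `x` and `y` alternate in `w`: the restriction of `w` to `{x, y}` has no two
consecutive equal letters. -/
def Alternates [DecidableEq V] (w : List V) (x y : V) : Prop :=
  (restrictWord w x y).Chain' (· ≠ ·)

/-- `w` word-represents the simple graph `G`: every vertex occurs in `w`, and two distinct
vertices are adjacent iff they alternate in `w`. -/
def Represents [DecidableEq V] (G : SimpleGraph V) (w : List V) : Prop :=
  (∀ v : V, v ∈ w) ∧ ∀ x y : V, x ≠ y → (G.Adj x y ↔ Alternates w x y)

/-- `ℓ(G)`: the minimal length of a word-representant of `G`. -/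
noncomputable def minRepLength [DecidableEq V] (G : SimpleGraph V) : ℕ :=
  sInf {n | ∃ w : List V, Represents G w ∧ w.length = n}

section ListAux

variable [DecidableEq V]

lemma filter_eq_replicate_count (l : List V) (z t : V) (hz : z ∉ l) :
    l.filter (fun q => decide (q = z ∨ q = t)) = List.replicate (l.count t) t := by
  induction l with
  | nil => simp
  | cons a l ih =>
    simp only [List.mem_cons, not_or] at hz
    have haz : a ≠ z := fun h => hz.1 h.symm
    rw [List.filter_cons]
    by_cases h : a = t
    · subst h
      rw [if_pos (by simp), List.count_cons_self, List.replicate_succ, ih hz.2]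
    · rw [if_neg (by simp [haz, h]), List.count_cons_of_ne h, ih hz.2]

lemma filter_eq_replicate_count' (l : List V) (z t : V) (hz : z ∉ l) :
    l.filter (fun q => decide (q = t ∨ q = z)) = List.replicate (l.count t) t := by
  induction l with
  | nil => simp
  | cons a l ih =>
    simp only [List.mem_cons, not_or] at hz
    have haz : a ≠ z := fun h => hz.1 h.symm
    rw [List.filter_cons]
    by_cases h : a = t
    · subst h
      rw [if_pos (by simp), List.count_cons_self, List.replicate_succ, ih hz.2]
    · rw [if_neg (by simp [haz, h]), List.count_cons_of_ne h, ih hz.2]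

lemma exists_split_count_one (w : List V) (z : V) (h : w.count z = 1) :
    ∃ s t, w = s ++ z :: t ∧ z ∉ s ∧ z ∉ t := by
  have hz : z ∈ w := List.count_pos_iff.mp (by omega)
  obtain ⟨s, t, rfl⟩ := List.append_of_mem hz
  rw [List.count_append, List.count_cons_self] at h
  exact ⟨s, t, rfl, List.count_eq_zero.mp (by omega), List.count_eq_zero.mp (by omega)⟩

lemma exists_split_count_two (w : List V) (z : V) (h : w.count z = 2) :
    ∃ s u t, w = s ++ z :: u ++ z :: t ∧ z ∉ s ∧ z ∉ u ∧ z ∉ t := by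
  have hz : z ∈ w := List.count_pos_iff.mp (by omega)
  obtain ⟨s, t, rfl⟩ := List.append_of_mem hz
  rw [List.count_append, List.count_cons_self] at h
  rcases Nat.lt_or_ge (s.count z) 1 with hs | hs
  · obtain ⟨u, r, rfl, hu, hr⟩ := exists_split_count_one t z (by omega)
    exact ⟨s, u, r, by simp, List.count_eq_zero.mp (by omega), hu, hr⟩
  · obtain ⟨s1, s2, rfl, h1, h2⟩ := exists_split_count_one s z (by omega)
    rw [List.count_append, List.count_cons_self] at h
    exact ⟨s1, s2, t, by simp, h1, h2, List.count_eq_zero.mp (by omega)⟩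

end ListAux

section Split2

variable (s u t : List V) (z : V)

-- note: `s ++ z :: u ++ z :: t` parses as `(s ++ z :: u) ++ z :: t`

lemma sp2_len : (s ++ z :: u).length = s.length + u.length + 1 := by
  simp [List.length_append]; omega

lemma sp2_left {j : ℕ} (hj : j < s.length) :
    (s ++ z :: u ++ z :: t)[j]? = s[j]? := by
  rw [List.getElem?_append_left (by rw [sp2_len]; omega), List.getElem?_append_left hj]

lemma sp2_A : (s ++ z :: u ++ z :: t)[s.length]? = some z := by
  rw [List.getElem?_append_left (by rw [sp2_len]; omega),
    List.getElem?_append_right (le_refl _)]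
  simp

lemma sp2_mid {j : ℕ} (h1 : s.length < j) (h2 : j < s.length + u.length + 1) :
    (s ++ z :: u ++ z :: t)[j]? = u[j - s.length - 1]? := by
  rw [List.getElem?_append_left (by rw [sp2_len]; omega),
    List.getElem?_append_right (by omega)]
  obtain ⟨k, hk⟩ : ∃ k, j - s.length = k + 1 := ⟨j - s.length - 1, by omega⟩
  rw [hk, List.getElem?_cons_succ]
  simp

lemma sp2_B : (s ++ z :: u ++ z :: t)[s.length + u.length + 1]? = some z := by
  rw [List.getElem?_append_right (by rw [sp2_len]), sp2_len]
  simp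

lemma sp2_right {j : ℕ} (h1 : s.length + u.length + 1 < j) :
    (s ++ z :: u ++ z :: t)[j]? = t[j - s.length - u.length - 2]? := by
  rw [List.getElem?_append_right (by rw [sp2_len]; omega), sp2_len]
  obtain ⟨k, hk⟩ : ∃ k, j - (s.length + u.length + 1) = k + 1 :=
    ⟨j - s.length - u.length - 2, by omega⟩
  rw [hk, List.getElem?_cons_succ]
  congr 1
  omega

lemma sp2_occ (hs : z ∉ s) (hu : z ∉ u) (ht : z ∉ t) {j : ℕ}
    (h : (s ++ z :: u ++ z :: t)[j]? = some z) :
    j = s.length ∨ j = s.length + u.length + 1 := by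
  rcases lt_trichotomy j s.length with h1 | h1 | h1
  · exact absurd (List.mem_iff_getElem?.mpr ⟨j, (sp2_left s u t z h1).symm.trans h⟩) hs
  · exact Or.inl h1
  rcases lt_trichotomy j (s.length + u.length + 1) with h2 | h2 | h2
  · exact absurd (List.mem_iff_getElem?.mpr ⟨_, (sp2_mid s u t z h1 h2).symm.trans h⟩) hu
  · exact Or.inr h2
  · exact absurd (List.mem_iff_getElem?.mpr ⟨_, (sp2_right s u t z h2).symm.trans h⟩) ht

lemma sp2_mem_left (v : V) :
    (∃ j, j < s.length ∧ (s ++ z :: u ++ z :: t)[j]? = some v) ↔ v ∈ s := by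
  constructor
  · rintro ⟨j, hj, h⟩
    exact List.mem_iff_getElem?.mpr ⟨j, (sp2_left s u t z hj).symm.trans h⟩
  · intro hv
    obtain ⟨j, hj⟩ := List.mem_iff_getElem?.mp hv
    have hjl : j < s.length := by
      by_contra hc
      rw [List.getElem?_eq_none (by omega)] at hj
      exact absurd hj (by simp)
    exact ⟨j, hjl, by rw [sp2_left s u t z hjl]; exact hj⟩

lemma sp2_mem_mid (v : V) :
    (∃ j, s.length < j ∧ j < s.length + u.length + 1 ∧
      (s ++ z :: u ++ z :: t)[j]? = some v) ↔ v ∈ u := by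
  constructor
  · rintro ⟨j, h1, h2, h⟩
    exact List.mem_iff_getElem?.mpr ⟨_, (sp2_mid s u t z h1 h2).symm.trans h⟩
  · intro hv
    obtain ⟨k, hk⟩ := List.mem_iff_getElem?.mp hv
    have hkl : k < u.length := by
      by_contra hc
      rw [List.getElem?_eq_none (by omega)] at hk
      exact absurd hk (by simp)
    refine ⟨s.length + 1 + k, by omega, by omega, ?_⟩
    rw [sp2_mid s u t z (by omega) (by omega)]
    convert hk using 2
    omega

lemma sp2_mem_right (v : V) :
    (∃ j, s.length + u.length + 1 < j ∧ (s ++ z :: u ++ z :: t)[j]? = some v) ↔ v ∈ t := by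
  constructor
  · rintro ⟨j, h1, h⟩
    exact List.mem_iff_getElem?.mpr ⟨_, (sp2_right s u t z h1).symm.trans h⟩
  · intro hv
    obtain ⟨k, hk⟩ := List.mem_iff_getElem?.mp hv
    refine ⟨s.length + u.length + 2 + k, by omega, ?_⟩
    rw [sp2_right s u t z (by omega)]
    convert hk using 2
    omega

end Split2

section Split1

variable (s t : List V) (z : V)

lemma sp1_A : (s ++ z :: t)[s.length]? = some z := by
  rw [List.getElem?_append_right (le_refl _)]
  simp

lemma sp1_occ (hs : z ∉ s) (ht : z ∉ t) {j : ℕ}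
    (h : (s ++ z :: t)[j]? = some z) : j = s.length := by
  rcases lt_trichotomy j s.length with h1 | h1 | h1
  · exact absurd (List.mem_iff_getElem?.mpr ⟨j, ((List.getElem?_append_left h1).symm.trans h)⟩) hs
  · exact h1
  · rw [List.getElem?_append_right (by omega)] at h
    obtain ⟨k, hk⟩ : ∃ k, j - s.length = k + 1 := ⟨j - s.length - 1, by omega⟩
    rw [hk, List.getElem?_cons_succ] at h
    exact absurd (List.mem_iff_getElem?.mpr ⟨k, h⟩) ht

lemma sp1_mem_right (v : V) :
    (∃ j, s.length < j ∧ (s ++ z :: t)[j]? = some v) ↔ v ∈ t := by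
  constructor
  · rintro ⟨j, h1, h⟩
    rw [List.getElem?_append_right (by omega)] at h
    obtain ⟨k, hk⟩ : ∃ k, j - s.length = k + 1 := ⟨j - s.length - 1, by omega⟩
    rw [hk, List.getElem?_cons_succ] at h
    exact List.mem_iff_getElem?.mpr ⟨k, h⟩
  · intro hv
    obtain ⟨k, hk⟩ := List.mem_iff_getElem?.mp hv
    refine ⟨s.length + 1 + k, by omega, ?_⟩
    rw [List.getElem?_append_right (by omega)]
    obtain ⟨m, hm⟩ : ∃ m, s.length + 1 + k - s.length = m + 1 := ⟨k, by omega⟩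
    rw [hm, List.getElem?_cons_succ]
    convert hk using 2
    omega

end Split1

section Chains

variable [DecidableEq V]

lemma chain2_iff (z t : V) (hzt : z ≠ t) (c1 c2 c3 : ℕ) (h : c1 + c2 + c3 = 2) :
    List.Chain' (· ≠ ·)
      (List.replicate c1 t ++ z :: (List.replicate c2 t ++ z :: List.replicate c3 t)) ↔
    c2 = 1 := by
  have htz := hzt.symm
  rcases (by omega :
      c1 = 2 ∧ c2 = 0 ∧ c3 = 0 ∨ c1 = 0 ∧ c2 = 2 ∧ c3 = 0 ∨ c1 = 0 ∧ c2 = 0 ∧ c3 = 2 ∨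
      c1 = 1 ∧ c2 = 1 ∧ c3 = 0 ∨ c1 = 1 ∧ c2 = 0 ∧ c3 = 1 ∨ c1 = 0 ∧ c2 = 1 ∧ c3 = 1) with
    ⟨rfl, rfl, rfl⟩ | ⟨rfl, rfl, rfl⟩ | ⟨rfl, rfl, rfl⟩ | ⟨rfl, rfl, rfl⟩ | ⟨rfl, rfl, rfl⟩ |
    ⟨rfl, rfl, rfl⟩ <;>
    simp [List.replicate_succ, List.Chain', List.isChain_cons_cons, hzt, htz]

lemma chain1_iff (z t : V) (hzt : z ≠ t) (c1 c2 c3 : ℕ) (h : c1 + c2 + c3 = 1) :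
    List.Chain' (· ≠ ·)
      (List.replicate c1 t ++ z :: (List.replicate c2 t ++ z :: List.replicate c3 t)) ↔
    c2 = 1 := by
  have htz := hzt.symm
  rcases (by omega : c1 = 1 ∧ c2 = 0 ∧ c3 = 0 ∨ c1 = 0 ∧ c2 = 1 ∧ c3 = 0 ∨
      c1 = 0 ∧ c2 = 0 ∧ c3 = 1) with
    ⟨rfl, rfl, rfl⟩ | ⟨rfl, rfl, rfl⟩ | ⟨rfl, rfl, rfl⟩ <;>
    simp [List.replicate_succ, List.Chain', List.isChain_cons_cons, hzt, htz]

lemma restrict_split2 (s u t : List V) (z c : V) (hs : z ∉ s) (hu : z ∉ u) (ht : z ∉ t) :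
    restrictWord (s ++ z :: u ++ z :: t) z c =
      List.replicate (s.count c) c ++ z ::
        (List.replicate (u.count c) c ++ z :: List.replicate (t.count c) c) := by
  unfold restrictWord
  rw [List.filter_append, List.filter_append, List.filter_cons, List.filter_cons,
    if_pos (by simp), if_pos (by simp),
    filter_eq_replicate_count s z c hs, filter_eq_replicate_count u z c hu,
    filter_eq_replicate_count t z c ht]
  simp

lemma restrict_split2' (s u t : List V) (z c : V) (hs : z ∉ s) (hu : z ∉ u) (ht : z ∉ t) :
    restrictWord (s ++ z :: u ++ z :: t) c z =
      List.replicate (s.count c) c ++ z ::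
        (List.replicate (u.count c) c ++ z :: List.replicate (t.count c) c) := by
  unfold restrictWord
  rw [List.filter_append, List.filter_append, List.filter_cons, List.filter_cons,
    if_pos (by simp), if_pos (by simp),
    filter_eq_replicate_count' s z c hs, filter_eq_replicate_count' u z c hu,
    filter_eq_replicate_count' t z c ht]
  simp

lemma restrict_split1 (s t : List V) (z c : V) (hs : z ∉ s) (ht : z ∉ t) :
    restrictWord (s ++ z :: t) z c =
      List.replicate (s.count c) c ++ z :: List.replicate (t.count c) c := by
  unfold restrictWord
  rw [List.filter_append, List.filter_cons, if_pos (by simp),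
    filter_eq_replicate_count s z c hs, filter_eq_replicate_count t z c ht]

end Chains

section AltChar

variable [DecidableEq V]

/-- Alternation characterization when both letters occur exactly twice. -/
lemma altChar22 (w : List V) (z t : V) (hzt : z ≠ t)
    (hcz : w.count z = 2) (hct : w.count t = 2)
    (fz lz ft lt : ℕ)
    (hflz : fz < lz) (hflt : ft < lt)
    (hoFz : w[fz]? = some z) (hoLz : w[lz]? = some z)
    (hoz : ∀ i, w[i]? = some z → i = fz ∨ i = lz)
    (hoFt : w[ft]? = some t) (hoLt : w[lt]? = some t)
    (hot : ∀ i, w[i]? = some t → i = ft ∨ i = lt) :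
    Alternates w z t ↔
      (fz < ft ∧ ft < lz ∧ lz < lt) ∨ (ft < fz ∧ fz < lt ∧ lt < lz) := by
  obtain ⟨s, u, r, rfl, hs, hu, hr⟩ := exists_split_count_two w z hcz
  have hA := hoz _ (sp2_A s u r z)
  have hB := hoz _ (sp2_B s u r z)
  have h3 := sp2_occ s u r z hs hu hr hoFz
  have h4 := sp2_occ s u r z hs hu hr hoLz
  have hfzA : fz = s.length := by omega
  have hlzB : lz = s.length + u.length + 1 := by omega
  subst hfzA hlzB
  have hsum : s.count t + u.count t + r.count t = 2 := by
    rw [List.count_append, List.count_append, List.count_cons_of_ne hzt,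
      List.count_cons_of_ne hzt] at hct
    omega
  have key : Alternates (s ++ z :: u ++ z :: r) z t ↔ u.count t = 1 := by
    unfold Alternates
    rw [restrict_split2 s u r z t hs hu hr]
    exact chain2_iff z t hzt _ _ _ hsum
  have hmu : 0 < u.count t ↔
      (s.length < ft ∧ ft < s.length + u.length + 1) ∨
      (s.length < lt ∧ lt < s.length + u.length + 1) := by
    rw [List.count_pos_iff, ← sp2_mem_mid s u r z t]
    constructor
    · rintro ⟨j, h1, h2, hj⟩
      rcases hot j hj with rfl | rfl
      · exact Or.inl ⟨h1, h2⟩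
      · exact Or.inr ⟨h1, h2⟩
    · rintro (⟨h1, h2⟩ | ⟨h1, h2⟩)
      · exact ⟨ft, h1, h2, hoFt⟩
      · exact ⟨lt, h1, h2, hoLt⟩
  have hms : 0 < s.count t ↔ (ft < s.length ∨ lt < s.length) := by
    rw [List.count_pos_iff, ← sp2_mem_left s u r z t]
    constructor
    · rintro ⟨j, h1, hj⟩
      rcases hot j hj with rfl | rfl
      · exact Or.inl h1
      · exact Or.inr h1
    · rintro (h1 | h1)
      · exact ⟨ft, h1, hoFt⟩
      · exact ⟨lt, h1, hoLt⟩
  have hmr : 0 < r.count t ↔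
      (s.length + u.length + 1 < ft ∨ s.length + u.length + 1 < lt) := by
    rw [List.count_pos_iff, ← sp2_mem_right s u r z t]
    constructor
    · rintro ⟨j, h1, hj⟩
      rcases hot j hj with rfl | rfl
      · exact Or.inl h1
      · exact Or.inr h1
    · rintro (h1 | h1)
      · exact ⟨ft, h1, hoFt⟩
      · exact ⟨lt, h1, hoLt⟩
  have d1 : ft ≠ s.length := by
    intro h
    rw [h, sp2_A s u r z] at hoFt
    exact hzt (Option.some_inj.mp hoFt)
  have d2 : ft ≠ s.length + u.length + 1 := by
    intro h
    rw [h, sp2_B s u r z] at hoFt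
    exact hzt (Option.some_inj.mp hoFt)
  have d3 : lt ≠ s.length := by
    intro h
    rw [h, sp2_A s u r z] at hoLt
    exact hzt (Option.some_inj.mp hoLt)
  have d4 : lt ≠ s.length + u.length + 1 := by
    intro h
    rw [h, sp2_B s u r z] at hoLt
    exact hzt (Option.some_inj.mp hoLt)
  rw [key, show (u.count t = 1) ↔ (0 < u.count t ∧ (0 < s.count t ∨ 0 < r.count t)) from
    by omega, hmu, hms, hmr]
  omega

/-- Alternation characterization: `a` occurs once, `z` occurs twice. -/
lemma altChar12 (w : List V) (a z : V) (haz : a ≠ z)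
    (hca : w.count a = 1) (hcz : w.count z = 2)
    (pa fz lz : ℕ) (hflz : fz < lz)
    (hoA : w[pa]? = some a) (hoa : ∀ i, w[i]? = some a → i = pa)
    (hoFz : w[fz]? = some z) (hoLz : w[lz]? = some z)
    (hoz : ∀ i, w[i]? = some z → i = fz ∨ i = lz) :
    Alternates w a z ↔ (fz < pa ∧ pa < lz) := by
  obtain ⟨s, u, r, rfl, hs, hu, hr⟩ := exists_split_count_two w z hcz
  have hA := hoz _ (sp2_A s u r z)
  have hB := hoz _ (sp2_B s u r z)
  have h3 := sp2_occ s u r z hs hu hr hoFz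
  have h4 := sp2_occ s u r z hs hu hr hoLz
  have hfzA : fz = s.length := by omega
  have hlzB : lz = s.length + u.length + 1 := by omega
  subst hfzA hlzB
  have hsum : s.count a + u.count a + r.count a = 1 := by
    rw [List.count_append, List.count_append, List.count_cons_of_ne haz.symm,
      List.count_cons_of_ne haz.symm] at hca
    omega
  have key : Alternates (s ++ z :: u ++ z :: r) a z ↔ u.count a = 1 := by
    unfold Alternates
    rw [restrict_split2' s u r z a hs hu hr]
    exact chain1_iff z a (Ne.symm haz) _ _ _ hsum
  rw [key, show (u.count a = 1) ↔ (0 < u.count a) from by omega, List.count_pos_iff,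
    ← sp2_mem_mid s u r z a]
  constructor
  · rintro ⟨j, h1, h2, hj⟩
    have := hoa j hj
    omega
  · rintro ⟨h1, h2⟩
    exact ⟨pa, h1, h2, hoA⟩

/-- Two letters occurring once each always alternate. -/
lemma altChar11 (w : List V) (a b : V) (hab : a ≠ b)
    (hca : w.count a = 1) (hcb : w.count b = 1) :
    Alternates w a b := by
  obtain ⟨s, t, rfl, hs, ht⟩ := exists_split_count_one w a hca
  unfold Alternates
  rw [restrict_split1 s t a b hs ht]
  rw [List.count_append, List.count_cons_of_ne hab] at hcb
  rcases (by omega : s.count b = 1 ∧ t.count b = 0 ∨ s.count b = 0 ∧ t.count b = 1) with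
    ⟨h1, h2⟩ | ⟨h1, h2⟩ <;> rw [h1, h2] <;>
    simp [List.replicate_succ, List.Chain', List.isChain_cons_cons, hab, hab.symm]

end AltChar

section GraphAux

lemma tree_no_triangle (T : SimpleGraph V) (hT : T.IsTree) {a b c : V}
    (hab : T.Adj a b) (hbc : T.Adj b c) (hca : T.Adj c a) : False := by
  have hac : a ≠ c := fun h => by subst h; exact hca.ne rfl
  have hp2 : (SimpleGraph.Walk.cons hab
      (SimpleGraph.Walk.cons hbc SimpleGraph.Walk.nil)).IsPath := by
    rw [SimpleGraph.Walk.isPath_def]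
    simp [hab.ne, hbc.ne, hac]
  have heq := hT.IsAcyclic.path_unique
    (⟨SimpleGraph.Walk.cons hab (SimpleGraph.Walk.cons hbc SimpleGraph.Walk.nil), hp2⟩ :
      T.Path a c)
    (SimpleGraph.Path.singleton (hca.symm))
  have hlen := congrArg (fun p : T.Path a c => (p : T.Walk a c).length) heq
  simp [SimpleGraph.Path.singleton] at hlen

lemma no_cross_reach [DecidableEq V] (T : SimpleGraph V) (hT : T.IsTree) {x y : V}
    (hxy : T.Adj x y) : ¬ (T.deleteEdges {s(x, y)}).Reachable x y := by
  intro h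
  obtain ⟨p0⟩ := h
  obtain ⟨pw, hpw⟩ : (T.deleteEdges {s(x, y)}).Path x y := p0.toPath
  have hsub : ∀ e ∈ pw.edges, e ∈ T.edgeSet := by
    intro e he
    have := pw.edges_subset_edgeSet he
    rw [SimpleGraph.edgeSet_deleteEdges] at this
    exact this.1
  have hnotin : s(x, y) ∉ pw.edges := by
    intro he
    have := pw.edges_subset_edgeSet he
    rw [SimpleGraph.edgeSet_deleteEdges] at this
    exact this.2 rfl
  have heq := hT.IsAcyclic.path_unique
    (⟨pw.transfer T hsub, hpw.transfer hsub⟩ : T.Path x y) (SimpleGraph.Path.singleton hxy)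
  have hin : s(x, y) ∈ (pw.transfer T hsub).edges := by
    have h2 := congrArg (fun p : T.Path x y => (p : T.Walk x y).edges) heq
    simp only at h2
    rw [h2]
    simp [SimpleGraph.Path.singleton]
  rw [SimpleGraph.Walk.edges_transfer] at hin
  exact hnotin hin

lemma reach_dichotomy (T : SimpleGraph V) (hT : T.IsTree) (x y : V) (z : V) :
    (T.deleteEdges {s(x, y)}).Reachable x z ∨ (T.deleteEdges {s(x, y)}).Reachable y z := by
  have key : ∀ (u v : V) (p : T.Walk u v),
      ((T.deleteEdges {s(x, y)}).Reachable x u ∨ (T.deleteEdges {s(x, y)}).Reachable y u) →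
      ((T.deleteEdges {s(x, y)}).Reachable x v ∨ (T.deleteEdges {s(x, y)}).Reachable y v) := by
    intro u v p
    induction p with
    | nil => exact id
    | @cons u c v h q ih =>
      intro hu
      refine ih ?_
      by_cases he : s(u, c) = s(x, y)
      · rcases Sym2.eq_iff.mp he with ⟨rfl, rfl⟩ | ⟨rfl, rfl⟩
        · exact Or.inr (SimpleGraph.Reachable.refl _)
        · exact Or.inl (SimpleGraph.Reachable.refl _)
      · have hadj : (T.deleteEdges {s(x, y)}).Adj u c :=
          SimpleGraph.deleteEdges_adj.mpr ⟨h, by simpa using he⟩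
        rcases hu with h' | h'
        · exact Or.inl (h'.trans hadj.reachable)
        · exact Or.inr (h'.trans hadj.reachable)
  obtain ⟨p⟩ := hT.isConnected.preconnected x z
  exact key x z p (Or.inl (SimpleGraph.Reachable.refl _))

lemma length_eq_sum_count [Fintype V] [DecidableEq V] (w : List V) :
    w.length = ∑ v, w.count v := by
  induction w with
  | nil => simp
  | cons c w ih =>
    have h1 : ∀ v : V, (c :: w).count v = w.count v + if v = c then 1 else 0 := by
      intro v
      rcases eq_or_ne v c with rfl | h
      · simp
      · simp [h, Ne.symm h]
    calc (c :: w).length = w.length + 1 := by rw [List.length_cons]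
      _ = (∑ v, w.count v) + ∑ v, if v = c then 1 else 0 := by
          rw [← ih, Finset.sum_ite_eq' Finset.univ c (fun _ => 1),
            if_pos (Finset.mem_univ c)]
      _ = ∑ v, (w.count v + if v = c then 1 else 0) := by
          rw [Finset.sum_add_distrib]
      _ = ∑ v, (c :: w).count v := by
          exact Finset.sum_congr rfl (fun v _ => (h1 v).symm)

end GraphAux

/-- Let `T` be a tree on `n ≥ 2` vertices and `w` a minimal-length
word-representant of `T` (of length `2n − 2`). Let `x` and `y` be the two vertices occurring
exactly once in `w`, with `x` occurring before `y` (so the restriction of `w` to `{x, y}`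
is exactly `[x, y]`). Then `xy` is an edge of `T` and `w = u ++ v` where every letter of `u`
lies in the component of `x` and every letter of `v` lies in the component of `y` of the
graph obtained from `T` by deleting the edge `xy`. -/
theorem minimal_rep_subtree_order [Fintype V] [DecidableEq V]
    (T : SimpleGraph V) (hT : T.IsTree) (n : ℕ) (hn : Fintype.card V = n) (h2 : 2 ≤ n)
    (w : List V) (hw : Represents T w) (hlen : w.length = 2 * n - 2)
    (x y : V) (hxy : x ≠ y) (hx : w.count x = 1) (hy : w.count y = 1)
    (horder : restrictWord w x y = [x, y]) :
    T.Adj x y ∧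
    ∃ u v : List V, w = u ++ v ∧
      (∀ z ∈ u, (T.deleteEdges {s(x, y)}).Reachable x z) ∧
      (∀ z ∈ v, (T.deleteEdges {s(x, y)}).Reachable y z) := by
  classical
  set T' := T.deleteEdges {s(x, y)} with hT'def
  have hAltxy : Alternates w x y := by
    unfold Alternates
    rw [horder]
    exact List.isChain_cons_cons.mpr ⟨hxy, List.isChain_singleton y⟩
  have hAdjxy : T.Adj x y := (hw.2 x y hxy).mpr hAltxy
  have hcpos : ∀ z : V, 1 ≤ w.count z := fun z => List.count_pos_iff.mpr (hw.1 z)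
  have hone : ∀ z : V, z ≠ x → z ≠ y → w.count z ≠ 1 := by
    intro z hzx hzy h1
    have haxz : T.Adj x z := (hw.2 x z (Ne.symm hzx)).mpr (altChar11 w x z (Ne.symm hzx) hx h1)
    have hazy : T.Adj z y := (hw.2 z y hzy).mpr (altChar11 w z y hzy h1 hy)
    exact tree_no_triangle T hT haxz hazy hAdjxy.symm
  have hcount2 : ∀ z : V, z ≠ x → z ≠ y → w.count z = 2 := by
    intro z hzx hzy
    by_contra hne
    have h3 : 3 ≤ w.count z := by have := hcpos z; have := hone z hzx hzy; omega
    have hyy : y ∈ Finset.univ.erase x :=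
      Finset.mem_erase.mpr ⟨Ne.symm hxy, Finset.mem_univ y⟩
    have hzS : z ∈ (Finset.univ.erase x).erase y :=
      Finset.mem_erase.mpr ⟨hzy, Finset.mem_erase.mpr ⟨hzx, Finset.mem_univ z⟩⟩
    have hsplit : ∑ v, w.count v =
        w.count x + (w.count y + ∑ v ∈ (Finset.univ.erase x).erase y, w.count v) := by
      rw [← Finset.add_sum_erase _ _ (Finset.mem_univ x), ← Finset.add_sum_erase _ _ hyy]
    have hcardS : ((Finset.univ.erase x).erase y).card = n - 2 := by
      rw [Finset.card_erase_of_mem hyy, Finset.card_erase_of_mem (Finset.mem_univ x),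
        Finset.card_univ, hn]
      omega
    have hS1 : 1 ≤ ((Finset.univ.erase x).erase y).card := Finset.card_pos.mpr ⟨z, hzS⟩
    have hSsum : 2 * ((Finset.univ.erase x).erase y).card + 1 ≤
        ∑ v ∈ (Finset.univ.erase x).erase y, w.count v := by
      rw [← Finset.add_sum_erase _ _ hzS]
      have hbound : ∀ v ∈ ((Finset.univ.erase x).erase y).erase z, 2 ≤ w.count v := by
        intro v hv
        have hvz := (Finset.mem_erase.mp hv).1
        have hvy := (Finset.mem_erase.mp (Finset.mem_erase.mp hv).2).1
        have hvx := (Finset.mem_erase.mp (Finset.mem_erase.mp (Finset.mem_erase.mp hv).2).2).1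
        have := hcpos v
        have := hone v hvx hvy
        omega
      have hb2 := Finset.card_nsmul_le_sum _ _ 2 hbound
      rw [smul_eq_mul] at hb2
      have hcz : (((Finset.univ.erase x).erase y).erase z).card =
          ((Finset.univ.erase x).erase y).card - 1 := Finset.card_erase_of_mem hzS
      omega
    have hlen2 : 2 * n - 2 = ∑ v, w.count v := by rw [← hlen, length_eq_sum_count]
    omega
  have hc12 : ∀ z : V, w.count z = 1 ∨ w.count z = 2 := by
    intro z
    rcases eq_or_ne z x with rfl | hzx
    · exact Or.inl hx
    rcases eq_or_ne z y with rfl | hzy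
    · exact Or.inl hy
    · exact Or.inr (hcount2 z hzx hzy)
  have hpack : ∀ z : V, ∃ f l : ℕ, f ≤ l ∧ w[f]? = some z ∧ w[l]? = some z ∧
      (∀ i, w[i]? = some z → i = f ∨ i = l) ∧ (w.count z = 2 → f < l) ∧
      (w.count z = 1 → f = l) := by
    intro z
    rcases hc12 z with h1 | h1
    · obtain ⟨s, t, hwst, hs, ht⟩ := exists_split_count_one w z h1
      refine ⟨s.length, s.length, le_refl _, ?_, ?_, ?_, ?_, fun _ => rfl⟩
      · rw [hwst]; exact sp1_A s t z
      · rw [hwst]; exact sp1_A s t z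
      · intro i hi; rw [hwst] at hi; exact Or.inl (sp1_occ s t z hs ht hi)
      · intro hc2; omega
    · obtain ⟨s, u, r, hwst, hs, hu, hr⟩ := exists_split_count_two w z h1
      refine ⟨s.length, s.length + u.length + 1, by omega, ?_, ?_, ?_, fun _ => by omega, ?_⟩
      · rw [hwst]; exact sp2_A s u r z
      · rw [hwst]; exact sp2_B s u r z
      · intro i hi; rw [hwst] at hi; exact sp2_occ s u r z hs hu hr hi
      · intro hc1; omega
  choose F L hFle hoF hoL hocc hflt hfl1 using hpack
  have hne_idx : ∀ {i j : ℕ} {a b : V}, a ≠ b → w[i]? = some a → w[j]? = some b → i ≠ j := by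
    intro i j a b hab h1 h2 hij
    rw [hij, h2] at h1
    exact hab (Option.some_inj.mp h1).symm
  have hLx : L x = F x := (hfl1 x hx).symm
  have hLy : L y = F y := (hfl1 y hy).symm
  have hoax : ∀ i, w[i]? = some x → i = F x := by
    intro i hi
    rcases hocc x i hi with h | h
    · exact h
    · rw [← hLx]; exact h
  have hoay : ∀ i, w[i]? = some y → i = F y := by
    intro i hi
    rcases hocc y i hi with h | h
    · exact h
    · rw [← hLy]; exact h
  have hT1 : ∀ z : V, z ≠ x → z ≠ y → (T.Adj x z ↔ (F z < F x ∧ F x < L z)) := by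
    intro z hzx hzy
    rw [hw.2 x z (Ne.symm hzx)]
    exact altChar12 w x z (Ne.symm hzx) hx (hcount2 z hzx hzy) (F x) (F z) (L z)
      (hflt z (hcount2 z hzx hzy)) (hoF x) hoax (hoF z) (hoL z) (hocc z)
  have hT2 : ∀ z : V, z ≠ x → z ≠ y → (T.Adj y z ↔ (F z < F y ∧ F y < L z)) := by
    intro z hzx hzy
    rw [hw.2 y z (Ne.symm hzy)]
    exact altChar12 w y z (Ne.symm hzy) hy (hcount2 z hzx hzy) (F y) (F z) (L z)
      (hflt z (hcount2 z hzx hzy)) (hoF y) hoay (hoF z) (hoL z) (hocc z)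
  have hT3 : ∀ z t : V, z ≠ x → z ≠ y → t ≠ x → t ≠ y → z ≠ t →
      (T.Adj z t ↔ ((F z < F t ∧ F t < L z ∧ L z < L t) ∨
        (F t < F z ∧ F z < L t ∧ L t < L z))) := by
    intro z t hzx hzy htx hty hzt
    rw [hw.2 z t hzt]
    exact altChar22 w z t hzt (hcount2 z hzx hzy) (hcount2 t htx hty) (F z) (L z) (F t) (L t)
      (hflt z (hcount2 z hzx hzy)) (hflt t (hcount2 t htx hty)) (hoF z) (hoL z) (hocc z)
      (hoF t) (hoL t) (hocc t)
  have hpxy : F x < F y := by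
    obtain ⟨s0, t0, hw0, hs0, ht0⟩ := exists_split_count_one w x hx
    have hres : restrictWord w x y =
        List.replicate (s0.count y) y ++ x :: List.replicate (t0.count y) y := by
      rw [hw0]; exact restrict_split1 s0 t0 x y hs0 ht0
    rw [horder] at hres
    have hsum0 : s0.count y + t0.count y = 1 := by
      have hcy := hy
      rw [hw0, List.count_append, List.count_cons_of_ne hxy] at hcy
      omega
    have hc0 : s0.count y = 0 := by
      by_contra hc
      have h1 : s0.count y = 1 := by omega
      rw [h1] at hres
      simp only [List.replicate_succ, List.replicate_zero, List.cons_append,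
        List.nil_append] at hres
      exact hxy (List.cons.injEq _ _ _ _ ▸ hres).1
    have hc1 : t0.count y = 1 := by omega
    obtain ⟨j, hj1, hj2⟩ := (sp1_mem_right s0 t0 x y).mpr (List.count_pos_iff.mp (by omega))
    have hFx : F x = s0.length := Eq.symm <| hoax s0.length (by rw [hw0]; exact sp1_A s0 t0 x)
    have hFyj : j = F y := hoay j (by rw [hw0]; exact hj2)
    omega
  have hC2 : ¬ T'.Reachable x y := no_cross_reach T hT hAdjxy
  have hdich : ∀ z, T'.Reachable x z ∨ T'.Reachable y z := fun z => reach_dichotomy T hT x y z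
  have hnadj : ∀ a b : V, T'.Reachable x a → T'.Reachable y b → ¬(a = x ∧ b = y) →
      ¬ T.Adj a b := by
    intro a b ha hb hne hadj
    by_cases he : s(a, b) = s(x, y)
    · rcases Sym2.eq_iff.mp he with ⟨rfl, rfl⟩ | ⟨rfl, rfl⟩
      · exact hne ⟨rfl, rfl⟩
      · exact hC2 ha
    · have hadj' : T'.Adj a b := SimpleGraph.deleteEdges_adj.mpr ⟨hadj, by simpa using he⟩
      exact hC2 ((ha.trans hadj'.reachable).trans hb.symm)
  have hML1step : ∀ c e : V, T'.Adj c e → T'.Reachable y c → F x < F c → F x < F e := by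
    intro c e hadj hrc hfc
    rcases eq_or_ne e y with rfl | hey
    · exact hpxy
    have hex : e ≠ x := by
      intro h
      subst h
      exact hC2 (hrc.trans hadj.reachable).symm
    have hre : T'.Reachable y e := hrc.trans hadj.reachable
    have hTadj : T.Adj c e := (SimpleGraph.deleteEdges_adj.mp hadj).1
    have hcontr : ¬ (F e < F x ∧ F x < L e) := by
      intro hh
      exact hnadj x e (SimpleGraph.Reachable.refl x) hre (fun p => hey p.2)
        ((hT1 e hex hey).mpr hh)
    have hne1 : F e ≠ F x := hne_idx hex (hoF e) (hoF x)
    rcases eq_or_ne c y with rfl | hcy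
    · have hadj2 := (hT2 e hex hey).mp hTadj
      by_contra hc
      exact hcontr ⟨by omega, by omega⟩
    · have hcx : c ≠ x := fun h => hC2 (h ▸ hrc).symm
      have hce : c ≠ e := hTadj.ne
      by_contra hc
      rcases (hT3 c e hcx hcy hex hey hce).mp hTadj with ⟨k1, k2, k3⟩ | ⟨k1, k2, k3⟩
      · omega
      · exact hcontr ⟨by omega, by omega⟩
  have hML1 : ∀ b, T'.Reachable y b → F x < F b := by
    intro b hb
    obtain ⟨p⟩ := hb
    have key : ∀ (c d : V) (p : T'.Walk c d), T'.Reachable y c → F x < F c → F x < F d := by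
      intro c d p
      induction p with
      | nil => exact fun _ h => h
      | @cons c m d h q ih =>
        intro hrc hfc
        exact ih (hrc.trans h.reachable) (hML1step c m h hrc hfc)
    exact key y b p (SimpleGraph.Reachable.refl y) hpxy
  have hML2step : ∀ c e : V, T'.Adj c e → T'.Reachable x c → L c < F y → L e < F y := by
    intro c e hadj hrc hlc
    rcases eq_or_ne e x with rfl | hex
    · rw [hLx]; exact hpxy
    have hey : e ≠ y := fun h => hC2 (h ▸ (hrc.trans hadj.reachable))
    have hre : T'.Reachable x e := hrc.trans hadj.reachable
    have hTadj : T.Adj c e := (SimpleGraph.deleteEdges_adj.mp hadj).1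
    have hcontr : ¬ (F e < F y ∧ F y < L e) := by
      intro hh
      exact hnadj e y hre (SimpleGraph.Reachable.refl y) (fun p => hex p.1)
        (((hT2 e hex hey).mpr hh).symm)
    have hne1 : L e ≠ F y := hne_idx hey (hoL e) (hoF y)
    rcases eq_or_ne c x with rfl | hcx
    · have hadj1 := (hT1 e hex hey).mp hTadj
      by_contra hc
      exact hcontr ⟨by omega, by omega⟩
    · have hcy : c ≠ y := fun h => hC2 (h ▸ hrc)
      have hce : c ≠ e := hTadj.ne
      by_contra hc
      rcases (hT3 c e hcx hcy hex hey hce).mp hTadj with ⟨k1, k2, k3⟩ | ⟨k1, k2, k3⟩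
      · exact hcontr ⟨by omega, by omega⟩
      · omega
  have hML2 : ∀ a, T'.Reachable x a → L a < F y := by
    intro a ha
    obtain ⟨p⟩ := ha
    have key : ∀ (c d : V) (p : T'.Walk c d), T'.Reachable x c → L c < F y → L d < F y := by
      intro c d p
      induction p with
      | nil => exact fun _ h => h
      | @cons c m d h q ih =>
        intro hrc hfc
        exact ih (hrc.trans h.reachable) (hML2step c m h hrc hfc)
    exact key x a p (SimpleGraph.Reachable.refl x) (by rw [hLx]; exact hpxy)
  have hSEP : ∀ a b : V, T'.Reachable x a → T'.Reachable y b → L a < F b := by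
    intro a b hra hrb
    rcases eq_or_ne a x with rfl | hax
    · rw [hLx]; exact hML1 b hrb
    rcases eq_or_ne b y with rfl | hby
    · exact hML2 a hra
    by_contra hcon
    have hay : a ≠ y := fun h => hC2 (h ▸ hra)
    have hbx : b ≠ x := fun h => hC2 (h ▸ hrb).symm
    have hab : a ≠ b := fun h => hC2 (hra.trans (h ▸ hrb).symm)
    have hFbLa : F b < L a := by
      have := hne_idx hab (hoL a) (hoF b)
      omega
    have hS1 : ∀ (c d : V) (p : T'.Walk c d),
        (T'.Reachable y d → F d < L a →
          ∃ b', T'.Reachable y b' ∧ b' ≠ x ∧ b' ≠ y ∧ F b' < L a ∧ L a < L b') →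
        (T'.Reachable y c → F c < L a →
          ∃ b', T'.Reachable y b' ∧ b' ≠ x ∧ b' ≠ y ∧ F b' < L a ∧ L a < L b') := by
      intro c d p
      induction p with
      | nil => exact id
      | @cons c m d h q ih =>
        intro hPd hrc hfc
        have hPm := ih hPd
        have hrm : T'.Reachable y m := hrc.trans h.reachable
        rcases eq_or_ne c y with rfl | hcy
        · exact absurd hfc (by have := hML2 a hra; omega)
        have hcx : c ≠ x := fun hh => hC2 (hh ▸ hrc).symm
        by_cases hfm : F m < L a
        · exact hPm hrm hfm
        · have hma : m ≠ a := fun hh => hC2 (hra.trans (hh ▸ hrm).symm)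
          have hFdne : F m ≠ L a := hne_idx hma (hoF m) (hoL a)
          have hTadj : T.Adj c m := (SimpleGraph.deleteEdges_adj.mp h).1
          rcases eq_or_ne m y with rfl | hmy
          · have hadj2 := (hT2 c hcx hcy).mp hTadj.symm
            exact ⟨c, hrc, hcx, hcy, hfc, by have := hML2 a hra; omega⟩
          · have hcm : c ≠ m := hTadj.ne
            rcases (hT3 c m hcx hcy (fun hh => hC2 (hh ▸ hrm).symm) hmy hcm).mp hTadj with
              ⟨k1, k2, k3⟩ | ⟨k1, k2, k3⟩
            · exact ⟨c, hrc, hcx, hcy, hfc, by omega⟩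
            · exact absurd hfc (by omega)
    obtain ⟨p⟩ := hrb.symm
    obtain ⟨b', hrb', hb'x, hb'y, hb'1, hb'2⟩ :=
      hS1 b y p (fun _ hcc => absurd hcc (by have := hML2 a hra; omega)) hrb hFbLa
    have hab' : a ≠ b' := fun hh => hC2 (hra.trans (hh ▸ hrb').symm)
    have hIa : F b' < F a := by
      by_contra hcF
      have h5 : F a ≠ F b' := hne_idx hab' (hoF a) (hoF b')
      have hadj5 : T.Adj a b' := (hT3 a b' hax hay hb'x hb'y hab').mpr
        (Or.inl ⟨by omega, by omega, by omega⟩)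
      exact hnadj a b' hra hrb' (fun p => hax p.1) hadj5
    have hS2 : ∀ (c d : V) (p : T'.Walk c d),
        (T'.Reachable x d → F b' < F d → L d < L b' → False) →
        (T'.Reachable x c → F b' < F c → L c < L b' → False) := by
      intro c d p
      induction p with
      | nil => exact id
      | @cons c m d h q ih =>
        intro hPd hrc h1 h2
        have hPm := ih hPd
        have hrm : T'.Reachable x m := hrc.trans h.reachable
        rcases eq_or_ne c x with rfl | hcx
        · exact absurd h1 (by have := hML1 b' hrb'; omega)
        have hcy : c ≠ y := fun hh => hC2 (hh ▸ hrc)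
        have hTadj : T.Adj c m := (SimpleGraph.deleteEdges_adj.mp h).1
        have hmb' : m ≠ b' := fun hh => hC2 (hrm.trans (hh ▸ hrb').symm)
        rcases eq_or_ne m x with rfl | hmx
        · have h3 := (hT1 c hcx hcy).mp hTadj.symm
          exact absurd (hML1 b' hrb') (by omega)
        have hmy : m ≠ y := fun hh => hC2 (hh ▸ hrm)
        have hcm : c ≠ m := hTadj.ne
        rcases (hT3 c m hcx hcy hmx hmy hcm).mp hTadj with ⟨k1, k2, k3⟩ | ⟨k1, k2, k3⟩
        · have hLm : L m < L b' := by
            by_contra hcL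
            have h5 : L m ≠ L b' := hne_idx hmb' (hoL m) (hoL b')
            have hadj5 : T.Adj m b' := (hT3 m b' hmx hmy hb'x hb'y hmb').mpr
              (Or.inr ⟨by omega, by omega, by omega⟩)
            exact hnadj m b' hrm hrb' (fun p => hmx p.1) hadj5
          exact hPm hrm (by omega) hLm
        · have hFm : F b' < F m := by
            by_contra hcF
            have h5 : F m ≠ F b' := hne_idx hmb' (hoF m) (hoF b')
            have hadj5 : T.Adj m b' := (hT3 m b' hmx hmy hb'x hb'y hmb').mpr
              (Or.inl ⟨by omega, by omega, by omega⟩)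
            exact hnadj m b' hrm hrb' (fun p => hmx p.1) hadj5
          exact hPm hrm hFm (by omega)
    obtain ⟨p2⟩ := hra.symm
    exact hS2 a x p2
      (fun _ hh _ => absurd hh (by have := hML1 b' hrb'; omega)) hra hIa hb'2
  refine ⟨hAdjxy, ?_⟩
  have hKa : ∀ a, T'.Reachable x a →
      L a < Finset.univ.sup (fun a : V => if T'.Reachable x a then L a + 1 else 0) := by
    intro a ha
    have h1 : (if T'.Reachable x a then L a + 1 else 0) ≤
        Finset.univ.sup (fun a : V => if T'.Reachable x a then L a + 1 else 0) :=
      Finset.le_sup (f := fun a : V => if T'.Reachable x a then L a + 1 else 0)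
        (Finset.mem_univ a)
    rw [if_pos ha] at h1
    omega
  have hKb : ∀ b, T'.Reachable y b →
      Finset.univ.sup (fun a : V => if T'.Reachable x a then L a + 1 else 0) ≤ F b := by
    intro b hb
    refine Finset.sup_le ?_
    intro a _
    by_cases h : T'.Reachable x a
    · rw [if_pos h]
      have := hSEP a b h hb
      omega
    · rw [if_neg h]
      omega
  set K : ℕ := Finset.univ.sup (fun a : V => if T'.Reachable x a then L a + 1 else 0) with hK
  refine ⟨w.take K, w.drop K, (List.take_append_drop K w).symm, ?_, ?_⟩
  · intro z hz
    obtain ⟨i, hi⟩ := List.mem_iff_getElem?.mp hz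
    have hiK : i < K := by
      by_contra hc
      rw [List.getElem?_eq_none (by rw [List.length_take]; omega)] at hi
      exact absurd hi (by simp)
    have hwi : w[i]? = some z := by rw [← List.getElem?_take_of_lt hiK]; exact hi
    rcases hdich z with hzx | hzy
    · exact hzx
    · have h1 := hocc z i hwi
      have h4 := hKb z hzy
      have h3 := hFle z
      exact absurd hiK (by omega)
  · intro z hz
    obtain ⟨i, hi⟩ := List.mem_iff_getElem?.mp hz
    have hwi : w[K + i]? = some z := by rw [← List.getElem?_drop]; exact hi
    rcases hdich z with hzx | hzy
    · have h1 := hocc z (K + i) hwi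
      have h4 := hKa z hzx
      have h3 := hFle z
      exact absurd h4 (by omega)
    · exact hzy
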